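/- Let G be a group, H ≤ G with [H, G] ≤ Z(G) and H abelian, generated by w₁,...,w_d. Then [H, G] is an abelian group and the map φ : G^d → [H,G] given by φ(g₁,...,g_d) = [w₁,g₁]⋯[w_d,g_d] is surjective. -/

import Mathlib

/-- The commutator `[a,g] = a⁻¹g⁻¹ag` (paper's convention). -/
def pcomm {G : Type*} [Group G] (a g : G) : G := a⁻¹ * g⁻¹ * a * g

open scoped commutatorElement IsMulCommutative

lemma pcomm_eq_commutator {G : Type*} [Group G] (a g : G) : pcomm a g = ⁅a⁻¹, g⁻¹⁆ := by
  simp only [pcomm, commutatorElement_def]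
  group

lemma pcomm_one_right {G : Type*} [Group G] (a : G) : pcomm a 1 = 1 := by
  simp [pcomm]

lemma pcomm_one_left {G : Type*} [Group G] (g : G) : pcomm 1 g = 1 := by
  simp [pcomm]

theorem commutator_abelian_and_surjective {G : Type*} [Group G] {d : ℕ}
    (w : Fin d → G) (H : Subgroup G) (hgen : H = Subgroup.closure (Set.range w))
    (hab : ∀ a ∈ H, ∀ b ∈ H, a * b = b * a)
    (hc : ⁅H, (⊤ : Subgroup G)⁆ ≤ Subgroup.center G) :
    (∀ a ∈ ⁅H, (⊤ : Subgroup G)⁆, ∀ b ∈ ⁅H, (⊤ : Subgroup G)⁆, a * b = b * a) ∧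
    (∀ x ∈ ⁅H, (⊤ : Subgroup G)⁆,
      ∃ g : Fin d → G, x = (List.ofFn fun i => pcomm (w i) (g i)).prod) := by
  have hw : ∀ i, w i ∈ H := fun i => hgen ▸ Subgroup.subset_closure ⟨i, rfl⟩
  -- commutators with elements of H are central
  have hcent : ∀ a ∈ H, ∀ g : G, pcomm a g ∈ Subgroup.center G := by
    intro a ha g
    apply hc
    rw [pcomm_eq_commutator]
    exact Subgroup.commutator_mem_commutator (H.inv_mem ha) (Subgroup.mem_top _)
  have hcomm : ∀ a ∈ H, ∀ g x : G, x * pcomm a g = pcomm a g * x := by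
    intro a ha g x
    exact Subgroup.mem_center_iff.mp (hcent a ha g) x
  -- bilinearity in the second argument
  have hmulg : ∀ a ∈ H, ∀ g₁ g₂ : G, pcomm a (g₁ * g₂) = pcomm a g₁ * pcomm a g₂ := by
    intro a ha g₁ g₂
    have key := hcomm a ha g₁ (a⁻¹ * g₂⁻¹ * a)
    simp only [pcomm] at key ⊢
    calc a⁻¹ * (g₁ * g₂)⁻¹ * a * (g₁ * g₂)
        = a⁻¹ * g₂⁻¹ * a * (a⁻¹ * g₁⁻¹ * a * g₁) * g₂ := by group
      _ = a⁻¹ * g₁⁻¹ * a * g₁ * (a⁻¹ * g₂⁻¹ * a) * g₂ := by rw [key]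
      _ = a⁻¹ * g₁⁻¹ * a * g₁ * (a⁻¹ * g₂⁻¹ * a * g₂) := by group
  -- bilinearity in the first argument
  have hmulh : ∀ a ∈ H, ∀ b g : G, pcomm (a * b) g = pcomm a g * pcomm b g := by
    intro a ha b g
    have key := hcomm a ha g b⁻¹
    simp only [pcomm] at key ⊢
    calc (a * b)⁻¹ * g⁻¹ * (a * b) * g
        = b⁻¹ * (a⁻¹ * g⁻¹ * a * g) * (g⁻¹ * b * g) := by group
      _ = a⁻¹ * g⁻¹ * a * g * b⁻¹ * (g⁻¹ * b * g) := by rw [key]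
      _ = a⁻¹ * g⁻¹ * a * g * (b⁻¹ * g⁻¹ * b * g) := by group
  have hinvg : ∀ a ∈ H, ∀ g : G, pcomm a g⁻¹ = (pcomm a g)⁻¹ := by
    intro a ha g
    have h := hmulg a ha g g⁻¹
    rw [mul_inv_cancel, pcomm_one_right] at h
    exact eq_inv_of_mul_eq_one_right h.symm
  have hinvh : ∀ a ∈ H, ∀ g : G, pcomm a⁻¹ g = (pcomm a g)⁻¹ := by
    intro a ha g
    have h := hmulh a ha a⁻¹ g
    rw [mul_inv_cancel, pcomm_one_left] at h
    exact eq_inv_of_mul_eq_one_right h.symm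
  -- lift the products to the (commutative) center
  set Z := Subgroup.center G with hZ
  set F : (Fin d → G) → Fin d → Z := fun g i => ⟨pcomm (w i) (g i), hcent _ (hw i) _⟩ with hF
  have hlift : ∀ g : Fin d → G,
      (List.ofFn fun i => pcomm (w i) (g i)).prod = ((∏ i, F g i : Z) : G) := by
    intro g
    rw [← Fin.prod_ofFn (F g)]
    show _ = Z.subtype (List.ofFn (F g)).prod
    rw [← List.prod_hom (List.ofFn (F g)) Z.subtype, List.map_ofFn]
    rfl
  -- the set of products is a subgroup
  set S : Subgroup G :=
    { carrier := {x | ∃ g : Fin d → G, x = (List.ofFn fun i => pcomm (w i) (g i)).prod}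
      one_mem' := ⟨fun _ => 1, by simp [pcomm_one_right]⟩
      mul_mem' := by
        rintro x y ⟨g, rfl⟩ ⟨g', rfl⟩
        refine ⟨fun i => g i * g' i, ?_⟩
        rw [hlift, hlift, hlift, ← Subgroup.coe_mul, ← Finset.prod_mul_distrib]
        congr 1
        apply Finset.prod_congr rfl
        intro i _
        apply Subtype.ext
        show pcomm (w i) (g i) * pcomm (w i) (g' i) = pcomm (w i) (g i * g' i)
        exact (hmulg (w i) (hw i) (g i) (g' i)).symm
      inv_mem' := by
        rintro x ⟨g, rfl⟩
        refine ⟨fun i => (g i)⁻¹, ?_⟩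
        rw [hlift, hlift, ← Subgroup.coe_inv, ← Finset.prod_inv_distrib]
        congr 1
        apply Finset.prod_congr rfl
        intro i _
        apply Subtype.ext
        show (pcomm (w i) (g i))⁻¹ = pcomm (w i) (g i)⁻¹
        exact (hinvg (w i) (hw i) (g i)).symm } with hS
  -- every pcomm a g with a ∈ H lies in S
  have hmemS : ∀ a ∈ H, ∀ g : G, pcomm a g ∈ S := by
    intro a ha g
    rw [hgen] at ha
    induction ha using Subgroup.closure_induction with
    | mem x hx =>
        obtain ⟨i, rfl⟩ := hx
        refine ⟨fun j => if j = i then g else 1, ?_⟩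
        rw [hlift]
        have : (∏ j, F (fun j => if j = i then g else 1) j : Z)
            = F (fun j => if j = i then g else 1) i := by
          apply Fintype.prod_eq_single
          intro j hj
          exact Subtype.ext (by simp [hF, hj, pcomm_one_right])
        rw [this]
        simp [hF]
    | one => rw [pcomm_one_left]; exact S.one_mem
    | mul x y hx hy ihx ihy =>
        rw [hmulh x (hgen ▸ hx) y g]
        exact S.mul_mem ihx ihy
    | inv x hx ihx =>
        rw [hinvh x (hgen ▸ hx) g]
        exact S.inv_mem ihx
  constructor
  · intro a ha b hb
    exact (Subgroup.mem_center_iff.mp (hc ha) b).symm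
  · intro x hx
    have hle : ⁅H, (⊤ : Subgroup G)⁆ ≤ S := by
      rw [Subgroup.commutator_le]
      intro h hh g _
      have : ⁅h, g⁆ = pcomm h⁻¹ g⁻¹ := by rw [pcomm_eq_commutator]; simp
      rw [this]
      exact hmemS h⁻¹ (H.inv_mem hh) g⁻¹
    exact hle hx
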